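/- Let [a,b] ⊂ ℝ be a compact interval. Then the 1-Wasserstein distance on probability measures on [a,b], given in closed form by d_{W_1}(P,Q) = ∫_0^1 |F_P^{[-1]}(t) − F_Q^{[-1]}(t)| dt, is conditionally negative definite: for every n ∈ ℕ, all probability measures P_1, …, P_n on [a,b] and all real coefficients a_1, …, a_n with Σᵢ aᵢ = 0, one has Σ_{i,j=1}^n aᵢ aⱼ ∫_0^1 |F_{P_i}^{[-1]}(t) − F_{P_j}^{[-1]}(t)| dt ≤ 0. -/

import Mathlib

open MeasureTheory

/-- The generalized inverse cumulative distribution function (quantile function) of a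
probability measure `μ` on `ℝ`: `F_μ^{[-1]}(t) = inf {x : F_μ(x) ≥ t}` where
`F_μ(x) = μ((−∞, x])`. -/
noncomputable def invCDF (μ : Measure ℝ) (t : ℝ) : ℝ :=
  sInf {x : ℝ | t ≤ (μ (Set.Iic x)).toReal}

lemma cnd_abs {n : ℕ} (x c : Fin n → ℝ) (hc : ∑ i, c i = 0) :
    ∑ i, ∑ j, c i * c j * |x i - x j| ≤ 0 := by
  rcases Nat.eq_zero_or_pos n with hn | hn
  · subst hn; simp
  haveI : Nonempty (Fin n) := ⟨⟨0, hn⟩⟩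
  set a0 : ℝ := Finset.univ.inf' Finset.univ_nonempty x with ha0
  have ha0le : ∀ i, a0 ≤ x i := fun i => Finset.inf'_le _ (Finset.mem_univ i)
  set g : Fin n → ℝ → ℝ := fun i => (Set.Ioc a0 (x i)).indicator (fun _ => (1:ℝ)) with hg
  have hgint : ∀ i j, Integrable (fun s => c i * c j * (g i s * g j s)) := by
    intro i j
    apply Integrable.const_mul
    have : (fun s => g i s * g j s)
        = (Set.Ioc a0 (min (x i) (x j))).indicator (fun _ => (1:ℝ)) := by
      funext s
      simp only [hg]
      rw [← Set.inter_indicator_mul]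
      simp [Set.Ioc_inter_Ioc]
    rw [this]
    rw [integrable_indicator_iff measurableSet_Ioc]
    exact integrableOn_const measure_Ioc_lt_top.ne (by simp)
  have hint : ∀ i j, ∫ s, g i s * g j s = min (x i) (x j) - a0 := by
    intro i j
    have e : (fun s => g i s * g j s)
        = (Set.Ioc a0 (min (x i) (x j))).indicator (fun _ => (1:ℝ)) := by
      funext s
      simp only [hg]
      rw [← Set.inter_indicator_mul]
      simp [Set.Ioc_inter_Ioc]
    rw [e, integral_indicator_const _ measurableSet_Ioc]
    rw [measureReal_def, Real.volume_Ioc, smul_eq_mul, mul_one,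
      ENNReal.toReal_ofReal (by simp [le_min (ha0le i) (ha0le j)] : (0:ℝ) ≤ min (x i) (x j) - a0)]
  set T : ℝ := ∑ i, ∑ j, c i * c j * (min (x i) (x j) - a0) with hT
  have key : 0 ≤ T := by
    have e : ∀ s, (∑ i, c i * g i s)^2 = ∑ i, ∑ j, c i * c j * (g i s * g j s) := by
      intro s
      rw [sq, Finset.sum_mul_sum]
      exact Finset.sum_congr rfl fun i _ => Finset.sum_congr rfl fun j _ => by ring
    have h1 : ∫ s, (∑ i, c i * g i s)^2 = T := by
      simp only [e]
      rw [integral_finset_sum _ (fun i _ => integrable_finset_sum _ (fun j _ => hgint i j))]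
      refine Finset.sum_congr rfl fun i _ => ?_
      rw [integral_finset_sum _ (fun j _ => hgint i j)]
      refine Finset.sum_congr rfl fun j _ => ?_
      rw [integral_const_mul, hint]
    calc (0:ℝ) ≤ ∫ s, (∑ i, c i * g i s)^2 := integral_nonneg fun s => sq_nonneg _
      _ = T := h1
  have habs : ∀ u v : ℝ, |u - v| = u + v - 2 * min u v := by
    intro u v
    have h1 := max_sub_min_eq_abs u v
    have h2 := max_add_min u v
    rw [abs_sub_comm] at h1
    linarith
  have main : ∑ i, ∑ j, c i * c j * |x i - x j| = -2 * T := by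
    simp only [habs]
    have e : ∀ i j : Fin n, c i * c j * (x i + x j - 2 * min (x i) (x j))
        = (c i * x i) * c j + c i * (c j * x j) + (-2 * a0) * (c i * c j)
          - 2 * (c i * c j * (min (x i) (x j) - a0)) := fun i j => by ring
    simp only [e, Finset.sum_add_distrib, Finset.sum_sub_distrib, ← Finset.mul_sum,
      ← Finset.sum_mul, hc, mul_zero, zero_mul, Finset.sum_const_zero]
    simp [hT, Finset.mul_sum]
  rw [main]; linarith

/-- **The 1-Wasserstein distance on a compact interval is conditionally negative definite.**
Let `[a,b] ⊂ ℝ` be a compact interval.  The 1-Wasserstein distance between probability measures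
on `[a,b]`, given in closed form by `d_{W₁}(P,Q) = ∫_0^1 |F_P^{[-1]}(t) − F_Q^{[-1]}(t)| dt`,
is conditionally negative definite: for every `n`, all probability measures `P₁, …, Pₙ`
supported on `[a,b]` and all real coefficients `a₁, …, aₙ` with `∑ᵢ aᵢ = 0`, one has
`∑_{i,j} aᵢ aⱼ ∫_0^1 |F_{Pᵢ}^{[-1]}(t) − F_{Pⱼ}^{[-1]}(t)| dt ≤ 0`. -/
theorem wasserstein1_cnd (a b : ℝ) (hab : a ≤ b) :
    ∀ (n : ℕ) (P : Fin n → Measure ℝ), (∀ i, IsProbabilityMeasure (P i)) →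
      (∀ i, P i (Set.Icc a b) = 1) →
      ∀ c : Fin n → ℝ, (∑ i, c i) = 0 →
        (∑ i, ∑ j, c i * c j *
          ∫ t in Set.Ioc (0 : ℝ) 1, |invCDF (P i) t - invCDF (P j) t|) ≤ 0 := by
  intro n P hP hsupp c hc
  -- basic facts about the quantile sets
  have hb_mem : ∀ i, ∀ t : ℝ, t ≤ 1 → b ∈ {x : ℝ | t ≤ ((P i) (Set.Iic x)).toReal} := by
    intro i t ht
    have h1 : P i (Set.Iic b) = 1 := by
      haveI := hP i
      refine le_antisymm prob_le_one ?_
      rw [← hsupp i]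
      exact measure_mono (Set.Icc_subset_Iic_self)
    simp [Set.mem_setOf_eq, h1, ht]
  have hlb : ∀ i, ∀ t : ℝ, 0 < t → ∀ x ∈ {x : ℝ | t ≤ ((P i) (Set.Iic x)).toReal}, a ≤ x := by
    intro i t ht x hx
    by_contra hxa
    push_neg at hxa
    haveI := hP i
    have hcompl : P i (Set.Icc a b)ᶜ = 0 := by
      rw [measure_compl measurableSet_Icc (measure_ne_top _ _), hsupp i, measure_univ,
        tsub_self]
    have hsub : Set.Iic x ⊆ (Set.Icc a b)ᶜ := by
      intro y hy
      simp only [Set.mem_compl_iff, Set.mem_Icc, not_and, not_le]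
      intro hay
      have : (y:ℝ) ≤ x := hy
      linarith
    have : P i (Set.Iic x) = 0 := le_antisymm (hcompl ▸ measure_mono hsub) zero_le
    rw [Set.mem_setOf_eq, this] at hx
    simp at hx
    linarith
  have ha_le : ∀ i, ∀ t : ℝ, 0 < t → t ≤ 1 → a ≤ invCDF (P i) t := by
    intro i t ht ht1
    exact le_csInf ⟨b, hb_mem i t ht1⟩ (hlb i t ht)
  have hle_b : ∀ i, ∀ t : ℝ, 0 < t → t ≤ 1 → invCDF (P i) t ≤ b := by
    intro i t ht ht1
    exact csInf_le ⟨a, hlb i t ht⟩ (hb_mem i t ht1)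
  have hmono : ∀ i, ∀ t1 t2 : ℝ, 0 < t1 → t1 ≤ t2 → t2 ≤ 1 →
      invCDF (P i) t1 ≤ invCDF (P i) t2 := by
    intro i t1 t2 h1 h12 h21
    refine csInf_le_csInf ⟨a, hlb i t1 h1⟩ ⟨b, hb_mem i t2 h21⟩ ?_
    intro x hx
    exact le_trans h12 hx
  -- monotone measurable extension
  set e : Fin n → ℝ → ℝ := fun i t => if t ≤ 0 then a else invCDF (P i) (min t 1) with he
  have hmin : ∀ t : ℝ, ¬ t ≤ 0 → 0 < min t 1 ∧ min t 1 ≤ 1 := by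
    intro t ht; push_neg at ht; exact ⟨lt_min ht one_pos, min_le_right _ _⟩
  have hemono : ∀ i, Monotone (e i) := by
    intro i t1 t2 h12
    simp only [he]
    by_cases h2 : t2 ≤ 0
    · rw [if_pos (le_trans h12 h2), if_pos h2]
    by_cases h1 : t1 ≤ 0
    · rw [if_pos h1, if_neg h2]
      exact ha_le i _ (hmin t2 h2).1 (hmin t2 h2).2
    · rw [if_neg h1, if_neg h2]
      exact hmono i _ _ (hmin t1 h1).1 (min_le_min h12 le_rfl) (min_le_right _ _)
  have hemeas : ∀ i, Measurable (e i) := fun i => (hemono i).measurable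
  have heeq : ∀ i, ∀ t ∈ Set.Ioc (0:ℝ) 1, e i t = invCDF (P i) t := by
    intro i t ht
    simp only [he]
    rw [if_neg (not_le.2 ht.1), min_eq_left ht.2]
  have hebd : ∀ i t, a ≤ e i t ∧ e i t ≤ b := by
    intro i t
    simp only [he]
    by_cases h : t ≤ 0
    · rw [if_pos h]; exact ⟨le_rfl, hab⟩
    · rw [if_neg h]
      exact ⟨ha_le i _ (hmin t h).1 (hmin t h).2, hle_b i _ (hmin t h).1 (hmin t h).2⟩
  -- integrability
  have hintg : ∀ i j, IntegrableOn (fun t => |invCDF (P i) t - invCDF (P j) t|)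
      (Set.Ioc (0:ℝ) 1) := by
    intro i j
    have h1 : IntegrableOn (fun t => |e i t - e j t|) (Set.Ioc (0:ℝ) 1) := by
      refine Integrable.mono' (integrable_const (b - a)) ?_ ?_
      · exact (((hemeas i).sub (hemeas j)).abs).aestronglyMeasurable
      · filter_upwards with t
        rw [Real.norm_eq_abs, abs_abs, abs_sub_le_iff]
        constructor
        · linarith [(hebd i t).1, (hebd i t).2, (hebd j t).1, (hebd j t).2]
        · linarith [(hebd i t).1, (hebd i t).2, (hebd j t).1, (hebd j t).2]
    refine h1.congr_fun ?_ measurableSet_Ioc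
    intro t ht
    show |e i t - e j t| = _
    rw [heeq i t ht, heeq j t ht]
  -- swap sum and integral
  have hswap : (∑ i, ∑ j, c i * c j *
      ∫ t in Set.Ioc (0 : ℝ) 1, |invCDF (P i) t - invCDF (P j) t|)
      = ∫ t in Set.Ioc (0:ℝ) 1, ∑ i, ∑ j, c i * c j * |invCDF (P i) t - invCDF (P j) t| := by
    rw [integral_finset_sum _ (fun i _ => integrable_finset_sum _
      (fun j _ => ((hintg i j).const_mul _)))]
    refine Finset.sum_congr rfl fun i _ => ?_
    rw [integral_finset_sum _ (fun j _ => ((hintg i j).const_mul _))]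
    exact Finset.sum_congr rfl fun j _ => (integral_const_mul _ _).symm
  rw [hswap]
  exact integral_nonpos fun t => cnd_abs (fun i => invCDF (P i) t) c hc
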